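/- Let F(x) := (D₁(D₂(3·Q·Y₂²)))(x), where 3·Q·Y₂² is the function x ↦ 3 Q(x) Y₂(x)². Then for every ξ ∈ ℝ, (2π)^{-1/2} ∫_ℝ e^{-ixξ} F(x) dx = −(3√π/64)·(−29 − 23ξ² + 9ξ⁴ + 3ξ⁶)·sech(πξ/2). In particular, at ξ = √3 and ξ = −√3 this Fourier transform equals −3√π·sech(π√3/2), which is nonzero. -/

import Mathlib

open MeasureTheory

noncomputable section

/-- `sech x = 1 / cosh x`. -/
def sech (x : ℝ) : ℝ := 1 / Real.cosh x

/-- The soliton `Q(x) = √2 sech x`. -/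
def Qsol (x : ℝ) : ℝ := Real.sqrt 2 * sech x

/-- The threshold resonance `Y₂(x) = 1 - (3/2) sech² x`. -/
def Y2 (x : ℝ) : ℝ := 1 - (3 / 2) * sech x ^ 2

/-- The Darboux operator `D₁ f = f' + tanh · f`. -/
def D1 (f : ℝ → ℝ) (x : ℝ) : ℝ := deriv f x + Real.tanh x * f x

/-- The Darboux operator `D₂ f = f' + 2 tanh · f`. -/
def D2 (f : ℝ → ℝ) (x : ℝ) : ℝ := deriv f x + 2 * Real.tanh x * f x

/-- `F = D₁(D₂(3 Q Y₂²))`. -/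
def Ffun (x : ℝ) : ℝ := D1 (D2 (fun y => 3 * Qsol y * Y2 y ^ 2)) x


lemma sech_pos (x : ℝ) : 0 < sech x := by
  unfold sech; positivity

lemma sech_le_one (x : ℝ) : sech x ≤ 1 := by
  unfold sech
  rw [div_le_one (Real.cosh_pos x)]
  exact Real.one_le_cosh x

lemma hasDerivAt_sech (x : ℝ) : HasDerivAt sech (-(sech x * Real.tanh x)) x := by
  have h := ((Real.hasDerivAt_cosh x).inv (Real.cosh_pos x).ne')
  have : sech = fun y => (Real.cosh y)⁻¹ := by
    funext y; simp [sech, one_div]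
  rw [this]
  refine h.congr_deriv (Eq.symm ?_)
  simp only [sech, Real.tanh_eq_sinh_div_cosh]
  ring

lemma hasDerivAt_tanh (x : ℝ) : HasDerivAt Real.tanh (sech x ^ 2) x := by
  have h := (Real.hasDerivAt_sinh x).div (Real.hasDerivAt_cosh x) (Real.cosh_pos x).ne'
  have : Real.tanh = fun y => Real.sinh y / Real.cosh y := by
    funext y; exact Real.tanh_eq_sinh_div_cosh y
  rw [this]
  refine h.congr_deriv (Eq.symm ?_)
  simp only [sech]
  have h2 := Real.cosh_sq_sub_sinh_sq x
  field_simp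
  linarith

lemma tanh_sq (x : ℝ) : Real.tanh x ^ 2 = 1 - sech x ^ 2 := by
  rw [Real.tanh_eq_sinh_div_cosh, sech]
  have h2 := Real.cosh_sq_sub_sinh_sq x
  have hc := (Real.cosh_pos x).ne'
  field_simp
  linarith

lemma abs_tanh_le_one (x : ℝ) : |Real.tanh x| ≤ 1 := by
  have h := tanh_sq x
  have h1 := sech_pos x
  have h2 := sech_le_one x
  nlinarith [abs_nonneg (Real.tanh x), sq_abs (Real.tanh x)]

def S1 (x : ℝ) : ℝ := -(sech x * Real.tanh x)
def S2 (x : ℝ) : ℝ := sech x - 2 * sech x ^ 3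
def S3 (x : ℝ) : ℝ := -(sech x * Real.tanh x) + 6 * sech x ^ 3 * Real.tanh x
def S4 (x : ℝ) : ℝ := sech x - 20 * sech x ^ 3 + 24 * sech x ^ 5
def S5 (x : ℝ) : ℝ :=
  -(sech x * Real.tanh x) + 60 * sech x ^ 3 * Real.tanh x - 120 * sech x ^ 5 * Real.tanh x
def S6 (x : ℝ) : ℝ := sech x - 182 * sech x ^ 3 + 840 * sech x ^ 5 - 720 * sech x ^ 7

lemma hasDerivAt_S1 (x : ℝ) : HasDerivAt S1 (S2 x) x := by
  have h := ((hasDerivAt_sech x).mul (hasDerivAt_tanh x)).neg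
  have := tanh_sq x
  refine h.congr_deriv (Eq.symm ?_)
  simp only [S2, S1]
  linear_combination (-(sech x)) * this

lemma hasDerivAt_S2 (x : ℝ) : HasDerivAt S2 (S3 x) x := by
  have h := (hasDerivAt_sech x).sub (((hasDerivAt_sech x).pow 3).const_mul 2)
  refine h.congr_deriv (Eq.symm ?_)
  simp only [S3]
  first
  | push_cast
  | skip
  ring

lemma hasDerivAt_S3 (x : ℝ) : HasDerivAt S3 (S4 x) x := by
  have h := ((hasDerivAt_sech x).mul (hasDerivAt_tanh x)).neg.add
    ((((hasDerivAt_sech x).pow 3).const_mul (6:ℝ)).mul (hasDerivAt_tanh x))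
  have ht := tanh_sq x
  refine h.congr_deriv (Eq.symm ?_)
  simp only [S4]
  simp only [Pi.pow_apply]
  first
  | push_cast
  | skip
  linear_combination (-(sech x) + 18 * sech x ^ 3) * ht

lemma hasDerivAt_S4 (x : ℝ) : HasDerivAt S4 (S5 x) x := by
  have h := ((hasDerivAt_sech x).sub (((hasDerivAt_sech x).pow 3).const_mul 20)).add
    (((hasDerivAt_sech x).pow 5).const_mul 24)
  refine h.congr_deriv (Eq.symm ?_)
  simp only [S5]
  first
  | push_cast
  | skip
  ring

lemma hasDerivAt_S5 (x : ℝ) : HasDerivAt S5 (S6 x) x := by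
  have h := (((hasDerivAt_sech x).mul (hasDerivAt_tanh x)).neg.add
    ((((hasDerivAt_sech x).pow 3).const_mul (60:ℝ)).mul (hasDerivAt_tanh x))).sub
    ((((hasDerivAt_sech x).pow 5).const_mul (120:ℝ)).mul (hasDerivAt_tanh x))
  have ht := tanh_sq x
  refine h.congr_deriv (Eq.symm ?_)
  simp only [S6]
  simp only [Pi.pow_apply]
  first
  | push_cast
  | skip
  linear_combination (-(sech x) + 180 * sech x ^ 3 - 600 * sech x ^ 5) * ht


def G1 (x : ℝ) : ℝ := 3 * Real.sqrt 2 *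
  (-(sech x * Real.tanh x) + 9 * sech x ^ 3 * Real.tanh x - 45/4 * sech x ^ 5 * Real.tanh x)
def G2 (x : ℝ) : ℝ := 3 * Real.sqrt 2 *
  (sech x * Real.tanh x + 3 * sech x ^ 3 * Real.tanh x - 27/4 * sech x ^ 5 * Real.tanh x)
def G3 (x : ℝ) : ℝ := 3 * Real.sqrt 2 *
  (-(sech x) - 7 * sech x ^ 3 + 183/4 * sech x ^ 5 - 81/2 * sech x ^ 7)

lemma hasDerivAt_f0 (x : ℝ) :
    HasDerivAt (fun y => 3 * Qsol y * Y2 y ^ 2) (G1 x) x := by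
  have hq : HasDerivAt Qsol _ x := (hasDerivAt_sech x).const_mul (Real.sqrt 2)
  have hY2 : HasDerivAt Y2 _ x := (((hasDerivAt_sech x).pow 2).const_mul (3/2 : ℝ)).const_sub 1
  have h := (hq.const_mul (3:ℝ)).mul (hY2.pow 2)
  refine h.congr_deriv (Eq.symm ?_)
  simp only [Pi.pow_apply]
  simp only [G1, Qsol, Y2]
  push_cast
  ring

lemma D2f0_eq : D2 (fun y => 3 * Qsol y * Y2 y ^ 2) = G2 := by
  funext y
  simp only [D2, (hasDerivAt_f0 y).deriv]
  simp only [G1, G2, Qsol, Y2]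
  ring

lemma hasDerivAt_G2 (x : ℝ) : HasDerivAt G2 (G3 x) x := by
  have h := (((((hasDerivAt_sech x).mul (hasDerivAt_tanh x)).add
    ((((hasDerivAt_sech x).pow 3).const_mul (3:ℝ)).mul (hasDerivAt_tanh x))).sub
    ((((hasDerivAt_sech x).pow 5).const_mul (27/4:ℝ)).mul (hasDerivAt_tanh x))).const_mul
    (3 * Real.sqrt 2))
  have ht := tanh_sq x
  refine h.congr_deriv (Eq.symm ?_)
  simp only [G3]
  simp only [Pi.pow_apply]
  push_cast
  linear_combination (3 * Real.sqrt 2 * (sech x + 9 * sech x ^ 3 - 135/4 * sech x ^ 5)) * ht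

lemma Ffun_eq (x : ℝ) :
    Ffun x = 3 * Real.sqrt 2 / 64 * (29 * sech x - 23 * S2 x - 9 * S4 x + 3 * S6 x) := by
  have ht := tanh_sq x
  simp only [Ffun, D1, D2f0_eq, (hasDerivAt_G2 x).deriv]
  simp only [G2, G3, S2, S4, S6]
  linear_combination (Real.sqrt 2 * (3 * sech x + 9 * sech x ^ 3 - 81/4 * sech x ^ 5)) * ht
lemma continuous_sech : Continuous sech :=
  continuous_const.div Real.continuous_cosh fun x => (Real.cosh_pos x).ne'

lemma continuous_tanh : Continuous Real.tanh := by
  have : Real.tanh = fun x => Real.sinh x / Real.cosh x := by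
    funext x; exact Real.tanh_eq_sinh_div_cosh x
  rw [this]
  exact Real.continuous_sinh.div Real.continuous_cosh fun x => (Real.cosh_pos x).ne'

lemma integrable_exp_neg_abs : Integrable (fun x : ℝ => Real.exp (-|x|)) := by
  have h1 : IntegrableOn (fun x : ℝ => Real.exp (-|x|)) (Set.Ioi 0) := by
    apply (exp_neg_integrableOn_Ioi 0 one_pos).congr_fun ?_ measurableSet_Ioi
    intro x hx
    simp [abs_of_pos (Set.mem_Ioi.mp hx)]
  have h2 : IntegrableOn (fun x : ℝ => Real.exp (-|x|)) (Set.Iic 0) := by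
    apply (integrableOn_exp_Iic 0).congr_fun ?_ measurableSet_Iic
    intro x hx
    simp [abs_of_nonpos (Set.mem_Iic.mp hx)]
  have := h2.union h1
  rwa [Set.Iic_union_Ioi, integrableOn_univ] at this

lemma sech_le (x : ℝ) : sech x ≤ 2 * Real.exp (-|x|) := by
  rw [sech, div_le_iff₀ (Real.cosh_pos x), Real.cosh_eq]
  have h1 : Real.exp (-x) * Real.exp x = 1 := by
    rw [← Real.exp_add]; simp
  rcases le_or_gt 0 x with h | h
  · rw [abs_of_nonneg h]
    nlinarith [Real.exp_pos (-x), Real.exp_pos x]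
  · rw [abs_of_neg h, neg_neg]
    nlinarith [Real.exp_pos (-x), Real.exp_pos x]

lemma integrable_sech : Integrable sech := by
  apply (integrable_exp_neg_abs.const_mul 2).mono continuous_sech.aestronglyMeasurable
  filter_upwards with x
  rw [Real.norm_eq_abs, Real.norm_eq_abs, abs_of_pos (sech_pos x),
    abs_of_pos (by positivity : (0:ℝ) < 2 * Real.exp (-|x|))]
  exact sech_le x

lemma integrable_dominated {g : ℝ → ℝ} (hc : Continuous g) (C : ℝ)
    (h : ∀ x, |g x| ≤ C * sech x) : Integrable g := by
  apply (integrable_sech.const_mul C).mono hc.aestronglyMeasurable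
  filter_upwards with x
  rw [Real.norm_eq_abs, Real.norm_eq_abs]
  exact (h x).trans (le_abs_self _)

lemma sech_pow_le (x : ℝ) {k : ℕ} (hk : 1 ≤ k) : sech x ^ k ≤ sech x := by
  calc sech x ^ k ≤ sech x ^ 1 :=
        pow_le_pow_of_le_one (sech_pos x).le (sech_le_one x) hk
    _ = sech x := pow_one _

lemma sech_tanh_bound (x : ℝ) {k : ℕ} (hk : 1 ≤ k) :
    |sech x ^ k * Real.tanh x| ≤ sech x := by
  rw [abs_mul, abs_of_pos (pow_pos (sech_pos x) _)]
  calc sech x ^ k * |Real.tanh x| ≤ sech x ^ k * 1 :=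
        mul_le_mul_of_nonneg_left (abs_tanh_le_one x) (pow_pos (sech_pos x) _).le
    _ = sech x ^ k := mul_one _
    _ ≤ sech x := sech_pow_le x hk

lemma sech_tanh_bound' (x : ℝ) {k : ℕ} (hk : 1 ≤ k) (c : ℝ) (hc : 0 ≤ c) :
    |c * sech x ^ k * Real.tanh x| ≤ c * sech x := by
  rw [mul_assoc, abs_mul, abs_of_nonneg hc]
  exact mul_le_mul_of_nonneg_left (sech_tanh_bound x hk) hc

lemma sech_mul_tanh_bound (x : ℝ) : |sech x * Real.tanh x| ≤ sech x := by
  simpa using sech_tanh_bound x (k := 1) le_rfl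

lemma integrable_S2 : Integrable S2 := by
  apply integrable_dominated (continuous_sech.sub (continuous_const.mul (continuous_sech.pow 3))) 3
  intro x
  have h3 := sech_pow_le x (k := 3) (by norm_num)
  have h0 := (sech_pos x).le
  have h3n : (0:ℝ) ≤ sech x ^ 3 := pow_nonneg h0 3
  beta_reduce
  simp only [Pi.sub_apply, Pi.mul_apply, Pi.pow_apply, Pi.add_apply, Pi.neg_apply]
  rw [abs_le]
  constructor <;> linarith

lemma integrable_S4 : Integrable S4 := by
  apply integrable_dominated ((continuous_sech.sub
    (continuous_const.mul (continuous_sech.pow 3))).add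
    (continuous_const.mul (continuous_sech.pow 5))) 45
  intro x
  have h3 := sech_pow_le x (k := 3) (by norm_num)
  have h5 := sech_pow_le x (k := 5) (by norm_num)
  have h0 := (sech_pos x).le
  have h3n : (0:ℝ) ≤ sech x ^ 3 := pow_nonneg h0 3
  have h5n : (0:ℝ) ≤ sech x ^ 5 := pow_nonneg h0 5
  beta_reduce
  simp only [Pi.sub_apply, Pi.mul_apply, Pi.pow_apply, Pi.add_apply, Pi.neg_apply]
  rw [abs_le]
  constructor <;> linarith

lemma integrable_S6 : Integrable S6 := by
  apply integrable_dominated (((continuous_sech.sub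
    (continuous_const.mul (continuous_sech.pow 3))).add
    (continuous_const.mul (continuous_sech.pow 5))).sub
    (continuous_const.mul (continuous_sech.pow 7))) 1743
  intro x
  have h3 := sech_pow_le x (k := 3) (by norm_num)
  have h5 := sech_pow_le x (k := 5) (by norm_num)
  have h7 := sech_pow_le x (k := 7) (by norm_num)
  have h0 := (sech_pos x).le
  have h3n : (0:ℝ) ≤ sech x ^ 3 := pow_nonneg h0 3
  have h5n : (0:ℝ) ≤ sech x ^ 5 := pow_nonneg h0 5
  have h7n : (0:ℝ) ≤ sech x ^ 7 := pow_nonneg h0 7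
  beta_reduce
  simp only [Pi.sub_apply, Pi.mul_apply, Pi.pow_apply, Pi.add_apply, Pi.neg_apply]
  rw [abs_le]
  constructor <;> linarith

lemma integrable_S1 : Integrable S1 := by
  apply integrable_dominated ((continuous_sech.mul continuous_tanh).neg) 1
  intro x
  have h := sech_mul_tanh_bound x
  beta_reduce
  simp only [Pi.sub_apply, Pi.mul_apply, Pi.pow_apply, Pi.add_apply, Pi.neg_apply]
  rw [abs_neg]
  linarith

lemma integrable_S3 : Integrable S3 := by
  apply integrable_dominated (((continuous_sech.mul continuous_tanh).neg).add
    ((continuous_const.mul (continuous_sech.pow 3)).mul continuous_tanh)) 7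
  intro x
  have h1 := sech_tanh_bound x (k := 1) le_rfl
  have h3 := sech_tanh_bound x (k := 3) (by norm_num)
  beta_reduce
  calc |(-(sech x * Real.tanh x) + 6 * sech x ^ 3 * Real.tanh x)|
      ≤ |(-(sech x * Real.tanh x))| + |6 * sech x ^ 3 * Real.tanh x| := abs_add_le _ _
    _ ≤ sech x + 6 * sech x := by
        rw [abs_neg]
        exact add_le_add (sech_mul_tanh_bound x)
          (sech_tanh_bound' x (by norm_num) 6 (by norm_num))
    _ = 7 * sech x := by ring

lemma integrable_S5 : Integrable S5 := by
  apply integrable_dominated ((((continuous_sech.mul continuous_tanh).neg).add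
    ((continuous_const.mul (continuous_sech.pow 3)).mul continuous_tanh)).sub
    ((continuous_const.mul (continuous_sech.pow 5)).mul continuous_tanh)) 181
  intro x
  have h1 := sech_tanh_bound x (k := 1) le_rfl
  have h3 := sech_tanh_bound x (k := 3) (by norm_num)
  have h5 := sech_tanh_bound x (k := 5) (by norm_num)
  beta_reduce
  calc |(-(sech x * Real.tanh x) + 60 * sech x ^ 3 * Real.tanh x
        - 120 * sech x ^ 5 * Real.tanh x)|
      ≤ |(-(sech x * Real.tanh x)) + 60 * sech x ^ 3 * Real.tanh x|
        + |120 * sech x ^ 5 * Real.tanh x| := abs_sub _ _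
    _ ≤ (|(-(sech x * Real.tanh x))| + |60 * sech x ^ 3 * Real.tanh x|)
        + |120 * sech x ^ 5 * Real.tanh x| := by gcongr; exact abs_add_le _ _
    _ ≤ (sech x + 60 * sech x) + 120 * sech x := by
        rw [abs_neg]
        exact add_le_add (add_le_add (sech_mul_tanh_bound x)
          (sech_tanh_bound' x (by norm_num) 60 (by norm_num)))
          (sech_tanh_bound' x (by norm_num) 120 (by norm_num))
    _ = 181 * sech x := by ring


namespace SechFT

def phi (v : ℝ) : ℝ := (1/2) * (Real.log (1 - v) - Real.log v)
def phi' (v : ℝ) : ℝ := -(1/(2*(v*(1-v))))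

lemma phi_image : phi '' Set.Ioo 0 1 = Set.univ := by
  ext x
  simp only [Set.mem_image, Set.mem_univ, iff_true]
  have hE : 0 < Real.exp (2*x) := Real.exp_pos _
  have hE1 : 0 < 1 + Real.exp (2*x) := by linarith
  refine ⟨1/(1+Real.exp (2*x)), ⟨by positivity, ?_⟩, ?_⟩
  · rw [div_lt_one hE1]; linarith
  · have h1v : 1 - 1/(1+Real.exp (2*x)) = Real.exp (2*x)/(1+Real.exp (2*x)) := by
      field_simp
      ring
    rw [phi, h1v, Real.log_div hE.ne' hE1.ne', Real.log_div one_ne_zero hE1.ne',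
      Real.log_one, Real.log_exp]
    ring

lemma phi_hasDeriv : ∀ v ∈ Set.Ioo (0:ℝ) 1,
    HasDerivWithinAt phi (phi' v) (Set.Ioo (0:ℝ) 1) v := by
  intro v hv
  obtain ⟨h0, h1⟩ := hv
  have h1v : (0:ℝ) < 1 - v := by linarith
  have hlog1 : HasDerivAt (fun y : ℝ => Real.log (1-y)) (-(1/(1-v))) v := by
    have h := (Real.hasDerivAt_log h1v.ne').comp v ((hasDerivAt_id v).const_sub 1)
    refine h.congr_deriv (Eq.symm ?_)
    rw [one_div]
    ring
  have h := ((hlog1.sub (Real.hasDerivAt_log h0.ne')).const_mul (1/2 : ℝ))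
  have : HasDerivAt phi (phi' v) v := by
    refine h.congr_deriv (Eq.symm ?_)
    rw [phi']
    field_simp
    ring
  exact this.hasDerivWithinAt

lemma phi_inj : Set.InjOn phi (Set.Ioo 0 1) := by
  intro a ha b hb hab
  obtain ⟨ha0, ha1⟩ := ha
  obtain ⟨hb0, hb1⟩ := hb
  have ha1' : (0:ℝ) < 1 - a := by linarith
  have hb1' : (0:ℝ) < 1 - b := by linarith
  have h : Real.log ((1-a)/a) = Real.log ((1-b)/b) := by
    rw [Real.log_div ha1'.ne' ha0.ne', Real.log_div hb1'.ne' hb0.ne']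
    have := hab
    simp only [phi] at this
    linarith
  have h2 : (1-a)/a = (1-b)/b := by
    have := congrArg Real.exp h
    rwa [Real.exp_log (by positivity), Real.exp_log (by positivity)] at this
  rw [div_eq_div_iff ha0.ne' hb0.ne'] at h2
  nlinarith

end SechFT

lemma sech_fourierIntegral (ξ : ℝ) :
    ∫ x : ℝ, Complex.exp (-(Complex.I * x * ξ)) * (sech x : ℂ)
      = Real.pi * (sech (Real.pi * ξ / 2) : ℂ) := by
  set s : ℂ := 1/2 + Complex.I * ξ / 2 with hs_def
  have hs_re : s.re = 1/2 := by simp [hs_def]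
  have hts_re : (1 - s).re = 1/2 := by rw [Complex.sub_re, hs_re]; norm_num
  have key : (∫ x : ℝ, Complex.exp (-(Complex.I * x * ξ)) * (sech x : ℂ))
      = Complex.betaIntegral s (1 - s) := by
    have h1 : (∫ x : ℝ, Complex.exp (-(Complex.I * x * ξ)) * (sech x : ℂ))
        = ∫ x in SechFT.phi '' Set.Ioo 0 1,
            Complex.exp (-(Complex.I * x * ξ)) * (sech x : ℂ) := by
      rw [SechFT.phi_image, setIntegral_univ]
    rw [h1, integral_image_eq_integral_abs_deriv_smul measurableSet_Ioo
      SechFT.phi_hasDeriv SechFT.phi_inj]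
    rw [Complex.betaIntegral, intervalIntegral.integral_of_le zero_le_one,
      integral_Ioc_eq_integral_Ioo]
    apply setIntegral_congr_fun measurableSet_Ioo
    intro v hv
    beta_reduce
    obtain ⟨h0, h1'⟩ := hv
    have h1v : (0:ℝ) < 1 - v := by linarith
    set a := Real.log v with ha_def
    set b := Real.log (1 - v) with hb_def
    have hva : Real.exp a = v := Real.exp_log h0
    have hvb : Real.exp b = 1 - v := Real.exp_log h1v
    -- |phi'| as an exponential
    have habs : |SechFT.phi' v| = Real.exp (-(a+b) - Real.log 2) := by
      rw [SechFT.phi', abs_neg, abs_of_pos (by positivity : (0:ℝ) < 1/(2*(v*(1-v))))]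
      rw [Real.exp_sub, Real.exp_neg, Real.exp_add, hva, hvb, Real.exp_log two_pos]
      field_simp
    -- sech (phi v) as an exponential
    have hsech : sech (SechFT.phi v) = Real.exp ((a+b)/2 + Real.log 2) := by
      have hkey : Real.exp (SechFT.phi v) + Real.exp (-SechFT.phi v)
          = Real.exp (-((a+b)/2)) := by
        have e1 : Real.exp (SechFT.phi v) = Real.exp (-((a+b)/2)) * Real.exp b := by
          rw [← Real.exp_add, SechFT.phi, ← ha_def, ← hb_def]; ring_nf
        have e2 : Real.exp (-SechFT.phi v) = Real.exp (-((a+b)/2)) * Real.exp a := by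
          rw [← Real.exp_add, SechFT.phi, ← ha_def, ← hb_def]; ring_nf
        rw [e1, e2, hva, hvb, ← mul_add]
        ring_nf
      rw [sech, Real.cosh_eq, hkey, Real.exp_add, Real.exp_log two_pos, Real.exp_neg]
      field_simp
    -- the complex powers as exponentials
    have hv0 : (v : ℂ) ≠ 0 := Complex.ofReal_ne_zero.mpr h0.ne'
    have hv1 : (1 : ℂ) - (v : ℂ) ≠ 0 := by
      rw [show (1:ℂ) - (v:ℂ) = ((1 - v : ℝ) : ℂ) by push_cast; ring]
      exact Complex.ofReal_ne_zero.mpr h1v.ne'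
    have hlogv : Complex.log (v : ℂ) = (a : ℂ) := (Complex.ofReal_log h0.le).symm
    have hlog1v : Complex.log ((1:ℂ) - (v:ℂ)) = (b : ℂ) := by
      rw [show (1:ℂ) - (v:ℂ) = ((1 - v : ℝ) : ℂ) by push_cast; ring]
      exact (Complex.ofReal_log h1v.le).symm
    rw [Complex.cpow_def_of_ne_zero hv0, Complex.cpow_def_of_ne_zero hv1, hlogv, hlog1v]
    rw [habs, hsech, Complex.real_smul]
    push_cast
    simp only [SechFT.phi]
    rw [← ha_def, ← hb_def]
    rw [← Complex.exp_add, ← Complex.exp_add, ← Complex.exp_add]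
    congr 1
    simp only [hs_def]
    push_cast
    ring
  have hs_pos : 0 < s.re := by rw [hs_re]; norm_num
  have hts_pos : 0 < (1-s).re := by rw [hts_re]; norm_num
  have hbeta : Complex.betaIntegral s (1 - s) = ↑Real.pi / Complex.sin (↑Real.pi * s) := by
    have h := Complex.Gamma_mul_Gamma_eq_betaIntegral hs_pos hts_pos
    rw [show s + (1 - s) = 1 by ring, Complex.Gamma_one, one_mul] at h
    rw [← h, Complex.Gamma_mul_Gamma_one_sub]
  have hsin : Complex.sin (↑Real.pi * s) = ((Real.cosh (Real.pi * ξ / 2) : ℝ) : ℂ) := by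
    have harg : (↑Real.pi : ℂ) * s = ↑(Real.pi/2) + ↑(Real.pi * ξ / 2) * Complex.I := by
      rw [hs_def]; push_cast; ring
    rw [harg, Complex.sin_add, ← Complex.ofReal_sin, ← Complex.ofReal_cos,
      Real.sin_pi_div_two, Real.cos_pi_div_two, Complex.cos_mul_I, ← Complex.ofReal_cosh]
    simp
  rw [key, hbeta, hsin]
  have hc : Real.cosh (Real.pi * ξ / 2) ≠ 0 := (Real.cosh_pos _).ne'
  rw [sech]
  push_cast
  field_simp

lemma J_eq (f : ℝ → ℂ) (ξ : ℝ) :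
    FourierTransform.fourier f (ξ / (2 * Real.pi))
      = ∫ x : ℝ, Complex.exp (-(Complex.I * x * ξ)) * f x := by
  rw [Real.fourier_real_eq_integral_exp_smul]
  congr 1
  funext v
  rw [smul_eq_mul]
  congr 2
  have hπ : (Real.pi : ℝ) ≠ 0 := Real.pi_ne_zero
  rw [show -2 * Real.pi * v * (ξ / (2 * Real.pi)) = -(v * ξ) by field_simp]
  push_cast
  ring

lemma integrable_mul_exp (f : ℝ → ℝ) (hf : Integrable f) (ξ : ℝ) :
    Integrable (fun x : ℝ => Complex.exp (-(Complex.I * x * ξ)) * (f x : ℂ)) := by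
  apply Integrable.bdd_mul (c := 1) hf.ofReal
  · apply Continuous.aestronglyMeasurable
    exact Complex.continuous_exp.comp (by continuity)
  · refine Filter.Eventually.of_forall (fun x => ?_)
    rw [show -(Complex.I * x * ξ) = (-(x*ξ):ℝ) * Complex.I by push_cast; ring]
    rw [Complex.norm_exp_ofReal_mul_I]

-- complex-valued versions
def cS0 : ℝ → ℂ := fun x => (sech x : ℂ)
def cS1 : ℝ → ℂ := fun x => (S1 x : ℂ)
def cS2 : ℝ → ℂ := fun x => (S2 x : ℂ)
def cS3 : ℝ → ℂ := fun x => (S3 x : ℂ)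
def cS4 : ℝ → ℂ := fun x => (S4 x : ℂ)
def cS5 : ℝ → ℂ := fun x => (S5 x : ℂ)
def cS6 : ℝ → ℂ := fun x => (S6 x : ℂ)

lemma deriv_cS0 : deriv cS0 = cS1 :=
  funext fun x => ((hasDerivAt_sech x).ofReal_comp (z := x)).deriv
lemma deriv_cS1 : deriv cS1 = cS2 :=
  funext fun x => ((hasDerivAt_S1 x).ofReal_comp (z := x)).deriv
lemma deriv_cS2 : deriv cS2 = cS3 :=
  funext fun x => ((hasDerivAt_S2 x).ofReal_comp (z := x)).deriv
lemma deriv_cS3 : deriv cS3 = cS4 :=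
  funext fun x => ((hasDerivAt_S3 x).ofReal_comp (z := x)).deriv
lemma deriv_cS4 : deriv cS4 = cS5 :=
  funext fun x => ((hasDerivAt_S4 x).ofReal_comp (z := x)).deriv
lemma deriv_cS5 : deriv cS5 = cS6 :=
  funext fun x => ((hasDerivAt_S5 x).ofReal_comp (z := x)).deriv

lemma diff_cS0 : Differentiable ℝ cS0 :=
  fun x => ((hasDerivAt_sech x).ofReal_comp (z := x)).differentiableAt
lemma diff_cS1 : Differentiable ℝ cS1 :=
  fun x => ((hasDerivAt_S1 x).ofReal_comp (z := x)).differentiableAt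
lemma diff_cS2 : Differentiable ℝ cS2 :=
  fun x => ((hasDerivAt_S2 x).ofReal_comp (z := x)).differentiableAt
lemma diff_cS3 : Differentiable ℝ cS3 :=
  fun x => ((hasDerivAt_S3 x).ofReal_comp (z := x)).differentiableAt
lemma diff_cS4 : Differentiable ℝ cS4 :=
  fun x => ((hasDerivAt_S4 x).ofReal_comp (z := x)).differentiableAt
lemma diff_cS5 : Differentiable ℝ cS5 :=
  fun x => ((hasDerivAt_S5 x).ofReal_comp (z := x)).differentiableAt

lemma int_cS0 : Integrable cS0 := integrable_sech.ofReal
lemma int_cS1 : Integrable cS1 := integrable_S1.ofReal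
lemma int_cS2 : Integrable cS2 := integrable_S2.ofReal
lemma int_cS3 : Integrable cS3 := integrable_S3.ofReal
lemma int_cS4 : Integrable cS4 := integrable_S4.ofReal
lemma int_cS5 : Integrable cS5 := integrable_S5.ofReal
lemma int_cS6 : Integrable cS6 := integrable_S6.ofReal

lemma FT_step1 : FourierTransform.fourier cS1
    = fun w : ℝ => (2 * Real.pi * Complex.I * w) • FourierTransform.fourier cS0 w := by
  rw [← deriv_cS0]
  exact Real.fourier_deriv int_cS0 diff_cS0 (deriv_cS0 ▸ int_cS1)
lemma FT_step2 : FourierTransform.fourier cS2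
    = fun w : ℝ => (2 * Real.pi * Complex.I * w) • FourierTransform.fourier cS1 w := by
  rw [← deriv_cS1]
  exact Real.fourier_deriv int_cS1 diff_cS1 (deriv_cS1 ▸ int_cS2)
lemma FT_step3 : FourierTransform.fourier cS3
    = fun w : ℝ => (2 * Real.pi * Complex.I * w) • FourierTransform.fourier cS2 w := by
  rw [← deriv_cS2]
  exact Real.fourier_deriv int_cS2 diff_cS2 (deriv_cS2 ▸ int_cS3)
lemma FT_step4 : FourierTransform.fourier cS4
    = fun w : ℝ => (2 * Real.pi * Complex.I * w) • FourierTransform.fourier cS3 w := by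
  rw [← deriv_cS3]
  exact Real.fourier_deriv int_cS3 diff_cS3 (deriv_cS3 ▸ int_cS4)
lemma FT_step5 : FourierTransform.fourier cS5
    = fun w : ℝ => (2 * Real.pi * Complex.I * w) • FourierTransform.fourier cS4 w := by
  rw [← deriv_cS4]
  exact Real.fourier_deriv int_cS4 diff_cS4 (deriv_cS4 ▸ int_cS5)
lemma FT_step6 : FourierTransform.fourier cS6
    = fun w : ℝ => (2 * Real.pi * Complex.I * w) • FourierTransform.fourier cS5 w := by
  rw [← deriv_cS5]
  exact Real.fourier_deriv int_cS5 diff_cS5 (deriv_cS5 ▸ int_cS6)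

lemma FT_pow (w : ℝ) :
    FourierTransform.fourier cS2 w = (2 * Real.pi * Complex.I * w)^2 * FourierTransform.fourier cS0 w ∧
    FourierTransform.fourier cS4 w = (2 * Real.pi * Complex.I * w)^4 * FourierTransform.fourier cS0 w ∧
    FourierTransform.fourier cS6 w = (2 * Real.pi * Complex.I * w)^6 * FourierTransform.fourier cS0 w := by
  have h1 := congrFun FT_step1 w
  have h2 := congrFun FT_step2 w
  have h3 := congrFun FT_step3 w
  have h4 := congrFun FT_step4 w
  have h5 := congrFun FT_step5 w
  have h6 := congrFun FT_step6 w
  simp only [smul_eq_mul] at h1 h2 h3 h4 h5 h6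
  refine ⟨?_, ?_, ?_⟩
  · rw [h2, h1]; ring
  · rw [h4, h3, h2, h1]; ring
  · rw [h6, h5, h4, h3, h2, h1]; ring

lemma main_FT (ξ : ℝ) :
    (∫ x : ℝ, Complex.exp (-(Complex.I * x * ξ)) * (Ffun x : ℂ))
      = ((3 * Real.sqrt 2 / 64 : ℝ) : ℂ)
          * (29 + 23 * (ξ:ℂ)^2 - 9 * (ξ:ℂ)^4 - 3 * (ξ:ℂ)^6)
          * (Real.pi * (sech (Real.pi * ξ / 2) : ℂ)) := by
  have hint0 := integrable_mul_exp sech integrable_sech ξ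
  have hint2 := integrable_mul_exp S2 integrable_S2 ξ
  have hint4 := integrable_mul_exp S4 integrable_S4 ξ
  have hint6 := integrable_mul_exp S6 integrable_S6 ξ
  have hE : (fun x : ℝ => Complex.exp (-(Complex.I * x * ξ)) * (Ffun x : ℂ))
      = fun x : ℝ => ((3 * Real.sqrt 2 / 64 : ℝ) : ℂ) *
          (29 * (Complex.exp (-(Complex.I * x * ξ)) * (sech x : ℂ))
            - 23 * (Complex.exp (-(Complex.I * x * ξ)) * (S2 x : ℂ))
            - 9 * (Complex.exp (-(Complex.I * x * ξ)) * (S4 x : ℂ))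
            + 3 * (Complex.exp (-(Complex.I * x * ξ)) * (S6 x : ℂ))) := by
    funext x
    rw [show (Ffun x : ℂ) = ((3 * Real.sqrt 2 / 64 * (29 * sech x - 23 * S2 x - 9 * S4 x
      + 3 * S6 x) : ℝ) : ℂ) by exact_mod_cast congrArg Complex.ofReal (Ffun_eq x)]
    push_cast
    ring
  have ha : Integrable (fun x : ℝ =>
      29 * (Complex.exp (-(Complex.I * x * ξ)) * (sech x : ℂ))
        - 23 * (Complex.exp (-(Complex.I * x * ξ)) * (S2 x : ℂ))
        - 9 * (Complex.exp (-(Complex.I * x * ξ)) * (S4 x : ℂ))) :=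
    ((hint0.const_mul 29).sub (hint2.const_mul 23)).sub (hint4.const_mul 9)
  have hb : Integrable (fun x : ℝ =>
      29 * (Complex.exp (-(Complex.I * x * ξ)) * (sech x : ℂ))
        - 23 * (Complex.exp (-(Complex.I * x * ξ)) * (S2 x : ℂ))) :=
    (hint0.const_mul 29).sub (hint2.const_mul 23)
  rw [hE, integral_const_mul, integral_add ha (hint6.const_mul 3),
    integral_sub hb (hint4.const_mul 9),
    integral_sub (hint0.const_mul 29) (hint2.const_mul 23),
    integral_const_mul, integral_const_mul, integral_const_mul, integral_const_mul]
  have j0 : (∫ x : ℝ, Complex.exp (-(Complex.I * x * ξ)) * ((sech x : ℝ) : ℂ))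
      = FourierTransform.fourier cS0 (ξ / (2 * Real.pi)) := (J_eq cS0 ξ).symm
  have j2 : (∫ x : ℝ, Complex.exp (-(Complex.I * x * ξ)) * ((S2 x : ℝ) : ℂ))
      = FourierTransform.fourier cS2 (ξ / (2 * Real.pi)) := (J_eq cS2 ξ).symm
  have j4 : (∫ x : ℝ, Complex.exp (-(Complex.I * x * ξ)) * ((S4 x : ℝ) : ℂ))
      = FourierTransform.fourier cS4 (ξ / (2 * Real.pi)) := (J_eq cS4 ξ).symm
  have j6 : (∫ x : ℝ, Complex.exp (-(Complex.I * x * ξ)) * ((S6 x : ℝ) : ℂ))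
      = FourierTransform.fourier cS6 (ξ / (2 * Real.pi)) := (J_eq cS6 ξ).symm
  rw [j0, j2, j4, j6]
  obtain ⟨p2, p4, p6⟩ := FT_pow (ξ / (2 * Real.pi))
  rw [p2, p4, p6]
  have e0 : FourierTransform.fourier cS0 (ξ / (2 * Real.pi))
      = Real.pi * (sech (Real.pi * ξ / 2) : ℂ) := by
    rw [J_eq]
    exact sech_fourierIntegral ξ
  have hc : (2 * (Real.pi:ℂ) * Complex.I * ((ξ / (2 * Real.pi) : ℝ) : ℂ))
      = Complex.I * (ξ:ℂ) := by
    have hπ : (Real.pi : ℂ) ≠ 0 := Complex.ofReal_ne_zero.mpr Real.pi_ne_zero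
    push_cast
    field_simp
  rw [hc, e0]
  have q2 : (Complex.I * (ξ:ℂ))^2 = -((ξ:ℂ)^2) := by
    rw [mul_pow, Complex.I_sq]; ring
  have q4 : (Complex.I * (ξ:ℂ))^4 = (ξ:ℂ)^4 := by
    rw [show (Complex.I * (ξ:ℂ))^4 = ((Complex.I * (ξ:ℂ))^2)^2 by ring, q2]; ring
  have q6 : (Complex.I * (ξ:ℂ))^6 = -((ξ:ℂ)^6) := by
    rw [show (Complex.I * (ξ:ℂ))^6 = ((Complex.I * (ξ:ℂ))^2)^3 by ring, q2]; ring
  rw [q2, q4, q6]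
  ring

/-- The Fourier transform of `D₁ D₂ (3 Q Y₂²)` and the resonance condition at `±√3`. -/
theorem fourier_transform_of_source_term :
    (∀ ξ : ℝ,
        (Real.sqrt (2 * Real.pi) : ℂ)⁻¹ *
            (∫ x : ℝ, Complex.exp (-(Complex.I * (x : ℂ) * (ξ : ℂ))) * (Ffun x : ℂ)) =
          ((-(3 * Real.sqrt Real.pi / 64) *
              (-29 - 23 * ξ ^ 2 + 9 * ξ ^ 4 + 3 * ξ ^ 6) * sech (Real.pi * ξ / 2) : ℝ) : ℂ)) ∧
      (∀ ξ : ℝ, ξ = Real.sqrt 3 ∨ ξ = -Real.sqrt 3 →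
        (Real.sqrt (2 * Real.pi) : ℂ)⁻¹ *
            (∫ x : ℝ, Complex.exp (-(Complex.I * (x : ℂ) * (ξ : ℂ))) * (Ffun x : ℂ)) =
          ((-3 * Real.sqrt Real.pi * sech (Real.pi * Real.sqrt 3 / 2) : ℝ) : ℂ)) ∧
      (-3 * Real.sqrt Real.pi * sech (Real.pi * Real.sqrt 3 / 2) : ℝ) ≠ 0 := by
  have hπ := Real.pi_pos
  have h2π : Real.sqrt (2 * Real.pi) ≠ 0 := (Real.sqrt_pos.mpr (by positivity)).ne'
  have hsqrtπ : Real.sqrt Real.pi = Real.sqrt 2 * Real.pi / Real.sqrt (2 * Real.pi) := by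
    rw [eq_div_iff h2π]
    rw [Real.sqrt_mul (by norm_num : (0:ℝ) ≤ 2)]
    rw [mul_comm (Real.sqrt Real.pi), mul_assoc, Real.mul_self_sqrt hπ.le]
  have part1 : ∀ ξ : ℝ,
      (Real.sqrt (2 * Real.pi) : ℂ)⁻¹ *
          (∫ x : ℝ, Complex.exp (-(Complex.I * (x : ℂ) * (ξ : ℂ))) * (Ffun x : ℂ)) =
        ((-(3 * Real.sqrt Real.pi / 64) *
            (-29 - 23 * ξ ^ 2 + 9 * ξ ^ 4 + 3 * ξ ^ 6) * sech (Real.pi * ξ / 2) : ℝ) : ℂ) := by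
    intro ξ
    rw [main_FT ξ]
    have hs2 : ((Real.sqrt (2 * Real.pi) : ℝ) : ℂ) ≠ 0 := Complex.ofReal_ne_zero.mpr h2π
    push_cast
    rw [show ((Real.sqrt Real.pi : ℝ) : ℂ)
        = (Real.sqrt 2 : ℂ) * (Real.pi : ℂ) / ((Real.sqrt (2 * Real.pi) : ℝ) : ℂ) by
      exact_mod_cast congrArg Complex.ofReal hsqrtπ]
    field_simp
    ring
  refine ⟨part1, fun ξ h => ?_, ?_⟩
  · have h3 : ξ ^ 2 = 3 := by
      rcases h with rfl | rfl
      · exact Real.sq_sqrt (by norm_num)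
      · rw [neg_pow]
        simp [Real.sq_sqrt (by norm_num : (3:ℝ) ≥ 0)]
    have hsech : sech (Real.pi * ξ / 2) = sech (Real.pi * Real.sqrt 3 / 2) := by
      rcases h with rfl | rfl
      · rfl
      · rw [sech, show Real.pi * -Real.sqrt 3 / 2 = -(Real.pi * Real.sqrt 3 / 2) by ring,
          Real.cosh_neg, ← sech]
    rw [part1 ξ, hsech]
    congr 1
    linear_combination ((-(3 * Real.sqrt Real.pi / 64)) * sech (Real.pi * Real.sqrt 3 / 2)
      * (3 * ξ ^ 4 + 18 * ξ ^ 2 + 31)) * h3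
  · have h1 : 0 < Real.sqrt Real.pi := Real.sqrt_pos.mpr hπ
    have h2 : 0 < sech (Real.pi * Real.sqrt 3 / 2) := sech_pos _
    exact (by nlinarith : (-3 * Real.sqrt Real.pi * sech (Real.pi * Real.sqrt 3 / 2) : ℝ) < 0).ne
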